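/- Let ρ: ℝ → ℝ be a convex and symmetric loss function with ρ(0) = 0 and ρ(x) > 0 for x ≠ 0, let λ > 0 and 1 ≤ h ≤ n. Let Z = (X, y) be a sample of n observations. Then there exists a constant M (depending only on Z, ρ, λ, h, but not on the contamination) such that for every corrupted sample Z̃ obtained from Z by replacing at most m ≤ n − h of the original observations by arbitrary values, every minimizer β̂ of Q_{Z̃}(β) = Σ_{i=1}^{h} (ρ(ỹ − X̃β))_{i:n} + h λ Σ_{j=1}^{p} |β_j| satisfies ‖β̂‖₂ ≤ M. Consequently, the breakdown point of this estimator is at least (n − h + 1)/n. -/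

import Mathlib

open Finset

/-- The `i`-th order statistic of the vector `r`, i.e. the `i`-th entry after sorting
the entries of `r` in nondecreasing order. -/
noncomputable def orderStat {n : ℕ} (r : Fin n → ℝ) (i : Fin n) : ℝ :=
  r (Tuple.sort r i)

/-- The sum of the `h` smallest entries (order statistics) of the vector `r`. -/
noncomputable def trimmedSum {n : ℕ} (h : ℕ) (r : Fin n → ℝ) : ℝ :=
  ∑ i ∈ Finset.univ.filter (fun i : Fin n => (i : ℕ) < h), orderStat r i

/-- The L¹ norm of a coefficient vector `β ∈ ℝ^p`. -/
noncomputable def l1norm {p : ℕ} (β : Fin p → ℝ) : ℝ := ∑ j, |β j|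

/-- The Euclidean (L²) norm of a coefficient vector `β ∈ ℝ^p`. -/
noncomputable def euclNorm {p : ℕ} (β : Fin p → ℝ) : ℝ := Real.sqrt (∑ j, β j ^ 2)

/-- `Corrupt m X X' y y'` : the sample `(X', y')` is obtained from the sample `(X, y)` by
replacing (at most) `m` of the `n` observations `(xᵢ', yᵢ)` by arbitrary values. -/
def Corrupt {n p : ℕ} (m : ℕ) (X X' : Fin n → Fin p → ℝ) (y y' : Fin n → ℝ) : Prop :=
  ∃ s : Finset (Fin n), s.card ≤ m ∧ ∀ i ∉ s, (∀ j, X' i j = X i j) ∧ y' i = y i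

/-- The trimmed penalized objective function
`Q_Z̃(β) = Σ_{i=1}^{h} (ρ(ỹ − X̃β))_{i:n} + h λ Σ_j |β_j|` with loss `ρ`. -/
noncomputable def QGen {n p : ℕ} (ρ : ℝ → ℝ) (lam : ℝ) (h : ℕ)
    (X : Fin n → Fin p → ℝ) (y : Fin n → ℝ) (β : Fin p → ℝ) : ℝ :=
  trimmedSum h (fun i => ρ (y i - ∑ j, X i j * β j)) + (h : ℝ) * lam * l1norm β

/-- `BreaksDown est X y m` : the supremum of `‖est(Z̃)‖₂` over all samples `Z̃` obtained
from `Z = (X, y)` by replacing `m` observations by arbitrary values is infinite. -/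
def BreaksDown {n p : ℕ} (est : (Fin n → Fin p → ℝ) → (Fin n → ℝ) → Fin p → ℝ)
    (X : Fin n → Fin p → ℝ) (y : Fin n → ℝ) (m : ℕ) : Prop :=
  ∀ M : ℝ, ∃ X' y', Corrupt m X X' y y' ∧ M < euclNorm (est X' y')

lemma fin_strictMono_le {h n : ℕ} (f : Fin h → Fin n) (hf : StrictMono f) :
    ∀ k : Fin h, (k : ℕ) ≤ (f k : ℕ) := by
  have key : ∀ k : ℕ, ∀ hk : k < h, k ≤ (f ⟨k, hk⟩ : ℕ) := by
    intro k
    induction k with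
    | zero => intro _; exact Nat.zero_le _
    | succ i ih =>
        intro hk
        have hi : i < h := Nat.lt_of_succ_lt hk
        have h1 := ih hi
        have h2 : f ⟨i, hi⟩ < f ⟨i + 1, hk⟩ := hf (by simp [Fin.lt_def])
        have h3 : (f ⟨i, hi⟩ : ℕ) < (f ⟨i + 1, hk⟩ : ℕ) := h2
        omega
  intro k; exact key k.1 k.2

lemma mono_sum_le {n h : ℕ} (hhn : h ≤ n) (g : Fin n → ℝ) (hg : Monotone g)
    (S : Finset (Fin n)) (hS : S.card = h) :
    ∑ i ∈ Finset.univ.filter (fun i : Fin n => (i : ℕ) < h), g i ≤ ∑ i ∈ S, g i := by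
  have hinj : Function.Injective (S.orderEmbOfFin hS) := (S.orderEmbOfFin hS).injective
  have himg : Finset.image (S.orderEmbOfFin hS) Finset.univ = S := by
    apply Finset.eq_of_subset_of_card_le
    · intro x hx
      simp only [Finset.mem_image, Finset.mem_univ, true_and] at hx
      obtain ⟨k, rfl⟩ := hx
      exact Finset.orderEmbOfFin_mem S hS k
    · rw [Finset.card_image_of_injective _ hinj, Finset.card_univ, Fintype.card_fin, hS]
  have hR : ∑ i ∈ S, g i = ∑ k : Fin h, g (S.orderEmbOfFin hS k) := by
    rw [eq_comm]
    refine Finset.sum_bij (fun k _ => S.orderEmbOfFin hS k)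
      (fun k _ => Finset.orderEmbOfFin_mem S hS k)
      (fun a _ b _ hab => hinj hab) ?_ (fun k _ => rfl)
    intro b hb
    rw [← himg] at hb
    simpa using Finset.mem_image.mp hb
  have hinj2 : Function.Injective (Fin.castLE hhn) := Fin.castLE_injective hhn
  have himg2 : Finset.image (Fin.castLE hhn) Finset.univ
      = Finset.univ.filter (fun i : Fin n => (i : ℕ) < h) := by
    ext x
    simp only [Finset.mem_image, Finset.mem_univ, true_and, Finset.mem_filter]
    constructor
    · rintro ⟨k, rfl⟩; exact k.2
    · intro hx; exact ⟨⟨x.1, hx⟩, rfl⟩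
  have hL : ∑ i ∈ Finset.univ.filter (fun i : Fin n => (i : ℕ) < h), g i
      = ∑ k : Fin h, g (Fin.castLE hhn k) := by
    rw [← himg2, Finset.sum_image (fun a _ b _ hab => hinj2 hab)]
  rw [hL, hR]
  apply Finset.sum_le_sum
  intro k _
  apply hg
  rw [Fin.le_def]
  exact fin_strictMono_le _ (S.orderEmbOfFin hS).strictMono k

lemma trimmedSum_le_sum_subset {n h : ℕ} (hhn : h ≤ n) (r : Fin n → ℝ)
    (hr : ∀ i, 0 ≤ r i) (T : Finset (Fin n)) (hT : h ≤ T.card) :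
    trimmedSum h r ≤ ∑ i ∈ T, r i := by
  obtain ⟨T', hsub, hcard⟩ := T.exists_subset_card_eq hT
  have step1 : trimmedSum h r ≤ ∑ i ∈ T', r i := by
    set σ := Tuple.sort r with hσ
    have hmono : Monotone (r ∘ σ) := Tuple.monotone_sort r
    have : ∑ i ∈ T', r i = ∑ i ∈ T'.map σ.symm.toEmbedding, (r ∘ σ) i := by
      rw [Finset.sum_map]
      simp
    rw [this]
    have hcard' : (T'.map σ.symm.toEmbedding).card = h := by rw [Finset.card_map, hcard]
    exact mono_sum_le hhn (r ∘ σ) hmono _ hcard'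
  refine step1.trans (Finset.sum_le_sum_of_subset_of_nonneg hsub fun i _ _ => hr i)

lemma trimmedSum_nonneg {n h : ℕ} (r : Fin n → ℝ) (hr : ∀ i, 0 ≤ r i) :
    0 ≤ trimmedSum h r :=
  Finset.sum_nonneg fun i _ => hr _

lemma euclNorm_le_l1norm {p : ℕ} (β : Fin p → ℝ) :
    Real.sqrt (∑ j, β j ^ 2) ≤ ∑ j, |β j| := by
  have h1 : ∑ j, β j ^ 2 ≤ (∑ j, |β j|) ^ 2 := by
    have := Finset.sum_sq_le_sq_sum_of_nonneg (s := Finset.univ)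
      (f := fun j : Fin p => |β j|) (fun i _ => abs_nonneg _)
    simpa [sq_abs] using this
  calc Real.sqrt (∑ j, β j ^ 2) ≤ Real.sqrt ((∑ j, |β j|) ^ 2) := Real.sqrt_le_sqrt h1
    _ = ∑ j, |β j| := Real.sqrt_sq (Finset.sum_nonneg fun j _ => abs_nonneg _)

/-- Lower-bound half of Theorem 1: there is a constant `M`, depending only on the sample
`Z = (X, y)`, the loss `ρ`, the penalty `λ` and the subset size `h`, such that for every
corrupted sample obtained by replacing at most `m ≤ n − h` observations, every minimizer of
the trimmed penalized objective has Euclidean norm at most `M`. Consequently, for any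
estimator that always picks a minimizer, replacing at most `n − h` observations cannot cause
breakdown, i.e. the breakdown point is at least `(n − h + 1)/n`. -/
theorem trimmed_penalized_no_breakdown_below
    {n p h : ℕ} (hh1 : 1 ≤ h) (hhn : h ≤ n)
    (ρ : ℝ → ℝ) (hconv : ConvexOn ℝ Set.univ ρ) (hsym : ∀ x : ℝ, ρ (-x) = ρ x)
    (hzero : ρ 0 = 0) (hpos : ∀ x : ℝ, x ≠ 0 → 0 < ρ x)
    (lam : ℝ) (hlam : 0 < lam)
    (X : Fin n → Fin p → ℝ) (y : Fin n → ℝ) :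
    ∃ M : ℝ,
      (∀ m : ℕ, m ≤ n - h → ∀ (X' : Fin n → Fin p → ℝ) (y' : Fin n → ℝ),
        Corrupt m X X' y y' →
        ∀ βhat : Fin p → ℝ,
          (∀ β : Fin p → ℝ, QGen ρ lam h X' y' βhat ≤ QGen ρ lam h X' y' β) →
          euclNorm βhat ≤ M) ∧
      (∀ est : (Fin n → Fin p → ℝ) → (Fin n → ℝ) → Fin p → ℝ,
        (∀ (X₀ : Fin n → Fin p → ℝ) (y₀ : Fin n → ℝ) (β : Fin p → ℝ),
          QGen ρ lam h X₀ y₀ (est X₀ y₀) ≤ QGen ρ lam h X₀ y₀ β) →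
        ∀ m : ℕ, BreaksDown est X y m → n - h + 1 ≤ m) := by
  classical
  have hρnn : ∀ x : ℝ, 0 ≤ ρ x := by
    intro x
    rcases eq_or_ne x 0 with hx | hx
    · rw [hx, hzero]
    · exact (hpos x hx).le
  set C : ℝ := ∑ i, ρ (y i) with hC
  have hC0 : 0 ≤ C := Finset.sum_nonneg fun i _ => hρnn _
  have hhl : 0 < (h : ℝ) * lam := by
    apply mul_pos _ hlam
    exact_mod_cast Nat.lt_of_lt_of_le Nat.zero_lt_one hh1
  set M : ℝ := C / ((h : ℝ) * lam) with hM
  have key : ∀ m : ℕ, m ≤ n - h → ∀ (X' : Fin n → Fin p → ℝ) (y' : Fin n → ℝ),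
      Corrupt m X X' y y' →
      ∀ βhat : Fin p → ℝ,
        (∀ β : Fin p → ℝ, QGen ρ lam h X' y' βhat ≤ QGen ρ lam h X' y' β) →
        euclNorm βhat ≤ M := by
    intro m hm X' y' hcorr βhat hmin
    obtain ⟨s, hs, hsp⟩ := hcorr
    have hcardsc : h ≤ sᶜ.card := by
      rw [Finset.card_compl, Fintype.card_fin]
      omega
    -- bound Q at 0
    have hQ0 : QGen ρ lam h X' y' (fun _ => 0) ≤ C := by
      have hres : (fun i => ρ (y' i - ∑ j, X' i j * (0:ℝ)))
          = fun i => ρ (y' i) := by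
        funext i; simp
      have hl10 : l1norm (fun _ : Fin p => (0:ℝ)) = 0 := by simp [l1norm]
      rw [QGen, hres, hl10, mul_zero, add_zero]
      have h1 : trimmedSum h (fun i => ρ (y' i)) ≤ ∑ i ∈ sᶜ, ρ (y' i) :=
        trimmedSum_le_sum_subset hhn _ (fun i => hρnn _) _ hcardsc
      have h2 : ∑ i ∈ sᶜ, ρ (y' i) = ∑ i ∈ sᶜ, ρ (y i) := by
        refine Finset.sum_congr rfl fun i hi => ?_
        rw [(hsp i (Finset.mem_compl.mp hi)).2]
      have h3 : ∑ i ∈ sᶜ, ρ (y i) ≤ C := by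
        rw [hC]
        exact Finset.sum_le_sum_of_subset_of_nonneg (Finset.subset_univ _)
          fun i _ _ => hρnn _
      linarith
    have hpen : (h : ℝ) * lam * l1norm βhat ≤ QGen ρ lam h X' y' βhat := by
      have := trimmedSum_nonneg (h := h)
        (fun i => ρ (y' i - ∑ j, X' i j * βhat j)) (fun i => hρnn _)
      rw [QGen]; linarith
    have hl1 : l1norm βhat ≤ M := by
      rw [hM, le_div_iff₀ hhl]
      have := (hpen.trans (hmin (fun _ => 0))).trans hQ0
      linarith
    calc euclNorm βhat ≤ l1norm βhat := euclNorm_le_l1norm βhat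
      _ ≤ M := hl1
  refine ⟨M, key, ?_⟩
  intro est hest m hbd
  by_contra hlt
  push_neg at hlt
  have hm : m ≤ n - h := by omega
  obtain ⟨X', y', hc, hgt⟩ := hbd M
  exact absurd (key m hm X' y' hc (est X' y') (hest X' y')) (not_le.mpr hgt)
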